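/- Let V be a 3-dimensional real inner product space with orthonormal basis {u, w, x}, let φ : V → V be the linear map with φu = w, φw = −u, φx = 0, set η(X) = ⟨X,x⟩, and let A : V → V be a symmetric linear map with Ax = βu where β ≠ 0. Define R(X,Y)Z = (c/4)(⟨Y,Z⟩X − ⟨X,Z⟩Y + ⟨φY,Z⟩φX − ⟨φX,Z⟩φY − 2⟨φX,Y⟩φZ) + ⟨AY,Z⟩AX − ⟨AX,Z⟩AY for a real number c, and l(X) = R(X,x)x. If l(X) = 0 for all X ∈ V, then c = 0. (This is the case α = 0 in the proof of Proposition 3.2: there is no point of a hypersurface in M₂(c), c ≠ 0, with Aξ = βU, β ≠ 0, and vanishing structure Jacobi operator.) -/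

import Mathlib

open scoped RealInnerProductSpace

/-- The case `α = 0` in the proof of Proposition 3.2: there is no point with `Aξ = βU`,
`β ≠ 0`, and vanishing structure Jacobi operator unless `c = 0`. -/
theorem vanishing_structure_jacobi_alpha_zero
    {V : Type*} [NormedAddCommGroup V] [InnerProductSpace ℝ V]
    (hdim : Module.finrank ℝ V = 3)
    (u w x : V) (hon : Orthonormal ℝ ![u, w, x])
    (φ : V →ₗ[ℝ] V) (hφu : φ u = w) (hφw : φ w = -u) (hφx : φ x = 0)
    (A : V →ₗ[ℝ] V) (hA : ∀ X Y : V, ⟪A X, Y⟫ = ⟪X, A Y⟫)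
    (β c : ℝ) (hβ : β ≠ 0)
    (hAx : A x = β • u)
    (R : V → V → V → V)
    (hR : ∀ X Y Z : V, R X Y Z =
      (c / 4) • (⟪Y, Z⟫ • X - ⟪X, Z⟫ • Y + ⟪φ Y, Z⟫ • φ X
        - ⟪φ X, Z⟫ • φ Y - (2 * ⟪φ X, Y⟫) • φ Z)
      + ⟪A Y, Z⟫ • A X - ⟪A X, Z⟫ • A Y)
    (l : V → V) (hl : ∀ X : V, l X = R X x x)
    (hl0 : ∀ X : V, l X = 0) :
    c = 0 := by
  have hiff := (orthonormal_iff_ite (𝕜 := ℝ)).mp hon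
  have hux : ⟪u, x⟫ = 0 := by simpa using hiff 0 2
  have hwx : ⟪w, x⟫ = 0 := by simpa using hiff 1 2
  have hwu : ⟪w, u⟫ = 0 := by simpa using hiff 1 0
  have hxx : ⟪x, x⟫ = 1 := by simpa using hiff 2 2
  have hw : w ≠ 0 := by
    intro h
    have := hiff 1 1
    simp [h] at this
  have h := hl0 w
  rw [hl, hR] at h
  rw [hAx, hφx] at h
  have h1 : ⟪A w, x⟫ = 0 := by rw [hA, hAx, real_inner_smul_right, hwu]; ring
  rw [h1] at h
  simp [hxx, hwx, real_inner_smul_left, hux, inner_zero_left] at h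
  rcases h with h | h
  · linarith
  · rcases h with h | h
    · simp [h] at hxx
    · exact absurd h hw
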